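/- For each fixed integer j ≥ 0, the exact tail asymptotics along the high-priority direction holds: lim_{i→∞} pi_{i,j}/(i^j·r_0^i) = C^j·pi_{0,0}/j!, where C = (q/(1−q))·((1−p)·mu_h·r_0^2 + (p·mu_h+(1−p)(1−mu_h))·r_0 + p(1−mu_h))/(p(1−mu_h) − (1−p)·mu_h·r_0^2). -/

import Mathlib

open Polynomial Filter

/-- Homogeneous second-order linear recurrence with distinct roots `r0 < 1 < r2`:
any solution tending to zero is proportional to `r0^i`. -/
lemma aux_homog (Av Bv Dv r0 r2 : ℝ) (hA : Av ≠ 0) (hr0 : |r0| < 1) (hr2 : 1 < r2)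
    (hroot0 : Av*r0^2 - Dv*r0 + Bv = 0) (hroot2 : Av*r2^2 - Dv*r2 + Bv = 0)
    (hne : r0 ≠ r2)
    (u : ℕ → ℝ) (hu : ∀ i:ℕ, 1 ≤ i → Dv * u i = Bv * u (i-1) + Av * u (i+1))
    (hu0 : Filter.Tendsto u Filter.atTop (nhds 0)) : ∀ i, u i = u 0 * r0^i := by
  set b : ℝ := (u 1 - r0 * u 0)/(r2 - r0) with hb
  set a : ℝ := u 0 - b with ha
  have hsub : r2 - r0 ≠ 0 := sub_ne_zero.mpr (Ne.symm hne)
  have hrep : ∀ i, u i = a * r0^i + b * r2^i := by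
    have key : ∀ i, u i = a * r0^i + b * r2^i ∧ u (i+1) = a * r0^(i+1) + b * r2^(i+1) := by
      intro i
      induction i with
      | zero =>
        constructor
        · rw [ha]; ring
        · show u 1 = a * r0^1 + b * r2^1
          rw [ha, hb]
          field_simp
          ring
      | succ n ih =>
        refine ⟨ih.2, ?_⟩
        have h1 := hu (n+1) (by omega)
        simp only [Nat.add_sub_cancel] at h1
        have e0 : Av * r0^(n+2) = Dv * r0^(n+1) - Bv * r0^n := by
          linear_combination (r0^n) * hroot0
        have e2 : Av * r2^(n+2) = Dv * r2^(n+1) - Bv * r2^n := by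
          linear_combination (r2^n) * hroot2
        have h2 : Av * u (n+1+1) = Av * (a * r0^(n+1+1) + b * r2^(n+1+1)) := by
          rw [ih.1, ih.2] at h1
          linear_combination -h1 - a * e0 - b * e2
        exact mul_left_cancel₀ hA h2
    exact fun i => (key i).1
  have hb0 : b = 0 := by
    by_contra hbne
    have h1 : Filter.Tendsto (fun i : ℕ => a * r0^i) Filter.atTop (nhds 0) := by
      simpa using (tendsto_pow_atTop_nhds_zero_of_norm_lt_one (by simpa using hr0)).const_mul a
    have h2 : Filter.Tendsto (fun i : ℕ => b * r2^i) Filter.atTop (nhds 0) := by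
      have : (fun i : ℕ => b * r2^i) = fun i => u i - a * r0^i := by
        funext i; rw [hrep i]; ring
      rw [this]
      simpa using hu0.sub h1
    have h3 : Filter.Tendsto (fun i : ℕ => |b| * r2^i) Filter.atTop Filter.atTop :=
      (tendsto_pow_atTop_atTop_of_one_lt hr2).const_mul_atTop (abs_pos.mpr hbne)
    have h4 : Filter.Tendsto (fun i : ℕ => |b| * r2^i) Filter.atTop (nhds 0) := by
      have := h2.abs
      simpa [abs_mul, abs_pow, abs_of_pos (lt_trans one_pos hr2)] using this
    exact (h3.not_tendsto (disjoint_nhds_atTop 0).symm) h4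
  intro i
  rw [hrep i, hb0, ha, hb0]
  ring

/-- The difference operator `P ↦ c1·P − c2·P(·+1) − c3·P(·−1)` on polynomials. -/
noncomputable def auxT (c1 c2 c3 : ℝ) (P : ℝ[X]) : ℝ[X] :=
  Polynomial.C c1 * P - Polynomial.C c2 * P.comp (X + Polynomial.C 1)
    - Polynomial.C c3 * P.comp (X + Polynomial.C (-1))

lemma auxT_add (c1 c2 c3 : ℝ) (P Q : ℝ[X]) :
    auxT c1 c2 c3 (P + Q) = auxT c1 c2 c3 P + auxT c1 c2 c3 Q := by
  simp only [auxT, add_comp]; ring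

lemma auxT_monomial_coeff (c1 c2 c3 a : ℝ) (m k : ℕ) :
    (auxT c1 c2 c3 (Polynomial.C a * X^m)).coeff k
      = a * (c1 * (if k = m then 1 else 0)
          - c2 * ((m.choose k : ℝ))
          - c3 * ((-1:ℝ)^(m-k) * (m.choose k : ℝ))) := by
  simp only [auxT, mul_comp, C_comp, X_comp, pow_comp, coeff_sub, coeff_C_mul,
    coeff_X_pow, coeff_X_add_C_pow, one_pow, one_mul]
  ring

/-- Surjectivity of the difference operator `auxT`, with degree raised by one and controlled
leading coefficient. -/
lemma aux_surjT (c1 c2 c3 : ℝ) (hc : c1 - c2 - c3 = 0) (he : c3 - c2 ≠ 0) :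
    ∀ n : ℕ, ∀ Q : ℝ[X], Q.natDegree ≤ n →
      ∃ P : ℝ[X], auxT c1 c2 c3 P = Q ∧ P.natDegree ≤ n+1 ∧
        P.coeff (n+1) = Q.coeff n / (((n:ℝ)+1)*(c3-c2)) := by
  intro n
  induction n with
  | zero =>
    intro Q hQ
    set a : ℝ := Q.coeff 0 / (1*(c3-c2)) with ha
    refine ⟨Polynomial.C a * X, ?_, ?_, ?_⟩
    · have hQC : Q = Polynomial.C (Q.coeff 0) := Polynomial.eq_C_of_natDegree_le_zero hQ
      have h1 : (Polynomial.C c1 : ℝ[X]) - Polynomial.C c2 - Polynomial.C c3 = 0 := by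
        rw [← map_sub, ← map_sub, hc, map_zero]
      have h2 : (Polynomial.C (a*(c3-c2)) : ℝ[X])
          = Polynomial.C a * (Polynomial.C c3 - Polynomial.C c2) := by
        rw [map_mul, map_sub]
      have key : auxT c1 c2 c3 (Polynomial.C a * X) = Polynomial.C (a*(c3-c2)) := by
        simp only [auxT, mul_comp, C_comp, X_comp, C_neg, C_1]
        linear_combination (Polynomial.C a * X) * h1 - h2
      rw [key, hQC]
      congr 1
      rw [ha]
      field_simp
    · exact le_trans (natDegree_C_mul_le a X) (by simp)
    · simp [coeff_C_mul, ha]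
  | succ n ih =>
    intro Q hQ
    set a : ℝ := Q.coeff (n+1) / (((n:ℝ)+1+1)*(c3-c2)) with ha
    set P1 : ℝ[X] := Polynomial.C a * X^(n+2) with hP1
    set R : ℝ[X] := Q - auxT c1 c2 c3 P1 with hR
    have hTP1coeff : ∀ k, (auxT c1 c2 c3 P1).coeff k
        = a * (c1 * (if k = n+2 then 1 else 0)
          - c2 * (((n+2).choose k : ℝ))
          - c3 * ((-1:ℝ)^(n+2-k) * ((n+2).choose k : ℝ))) := by
      intro k; exact auxT_monomial_coeff c1 c2 c3 a (n+2) k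
    have hRdeg : R.natDegree ≤ n := by
      rw [Polynomial.natDegree_le_iff_coeff_eq_zero]
      intro m hm
      rw [hR, coeff_sub, hTP1coeff m]
      rcases lt_trichotomy m (n+2) with h | h | h
      · have hm1 : m = n+1 := by omega
        subst hm1
        have h1 : (n+2).choose (n+1) = n+2 := by
          rw [show n+2 = (n+1)+1 from rfl, Nat.choose_succ_self_right]
        have h2 : n+2-(n+1) = 1 := by omega
        rw [if_neg (by omega), h1, h2]
        rw [ha]
        push_cast
        field_simp
        ring
      · subst h
        have hQz : Q.coeff (n+2) = 0 := Polynomial.coeff_eq_zero_of_natDegree_lt (by omega)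
        rw [hQz, if_pos rfl, Nat.choose_self, Nat.sub_self]
        push_cast
        linear_combination (-a) * hc
      · have hQz : Q.coeff m = 0 := Polynomial.coeff_eq_zero_of_natDegree_lt (by omega)
        have hch : (n+2).choose m = 0 := Nat.choose_eq_zero_of_lt h
        rw [hQz, if_neg (by omega), hch]
        push_cast
        ring
    obtain ⟨P2, hTP2, hP2deg, _⟩ := ih R hRdeg
    refine ⟨P1 + P2, ?_, ?_, ?_⟩
    · rw [auxT_add, hTP2, hR]; ring
    · refine le_trans (natDegree_add_le _ _) (max_le ?_ (by omega))
      exact le_trans (natDegree_C_mul_le a (X^(n+2))) (by simp)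
    · rw [coeff_add, hP1, coeff_C_mul, coeff_X_pow, if_pos rfl,
        Polynomial.coeff_eq_zero_of_natDegree_lt (lt_of_le_of_lt hP2deg (by omega))]
      rw [ha]
      push_cast
      ring

lemma aux_coeff_comp_X_add_C (P : ℝ[X]) (r : ℝ) (n : ℕ) (h : P.natDegree ≤ n) :
    (P.comp (X + Polynomial.C r)).coeff n = P.coeff n := by
  conv_lhs => rw [Polynomial.as_sum_range' P (n+1) (by omega)]
  rw [sum_comp, finset_sum_coeff]
  have hterm : ∀ k ∈ Finset.range (n+1),
      (((monomial k) (P.coeff k)).comp (X + Polynomial.C r)).coeff n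
        = if k = n then P.coeff n else 0 := by
    intro k hk
    rw [Finset.mem_range] at hk
    rw [monomial_comp, coeff_C_mul, coeff_X_add_C_pow]
    by_cases hkn : k = n
    · subst hkn
      simp [Nat.choose_self]
    · have : k < n := by omega
      rw [Nat.choose_eq_zero_of_lt this, if_neg hkn]
      simp
  rw [Finset.sum_congr rfl hterm, Finset.sum_ite_eq' (Finset.range (n+1)) n]
  simp

lemma aux_poly_geom_tendsto_zero (P : ℝ[X]) {r : ℝ} (h0 : 0 ≤ r) (h1 : r < 1) :
    Tendsto (fun i : ℕ => P.eval (i:ℝ) * r ^ i) atTop (nhds 0) := by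
  have hev : ∀ i : ℕ, P.eval (i:ℝ) * r ^ i
      = ∑ k ∈ Finset.range (P.natDegree + 1), P.coeff k * ((i:ℝ)^k * r^i) := by
    intro i
    rw [Polynomial.eval_eq_sum_range, Finset.sum_mul]
    congr 1; funext k; ring
  simp only [hev]
  have : Tendsto (fun i : ℕ => ∑ k ∈ Finset.range (P.natDegree + 1),
      P.coeff k * ((i:ℝ)^k * r^i)) atTop (nhds (∑ k ∈ Finset.range (P.natDegree + 1), 0)) := by
    apply tendsto_finset_sum
    intro k _
    have hs : Summable (fun i : ℕ => (i:ℝ)^k * r^i) :=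
      summable_pow_mul_geometric_of_norm_lt_one k (by rwa [Real.norm_eq_abs, abs_of_nonneg h0])
    simpa using (hs.tendsto_atTop_zero).const_mul (P.coeff k)
  simpa using this

lemma aux_poly_div_pow_tendsto (P : ℝ[X]) (j : ℕ) (h : P.natDegree ≤ j) :
    Tendsto (fun i : ℕ => P.eval (i:ℝ) / (i:ℝ)^j) atTop (nhds (P.coeff j)) := by
  have hev : ∀ i : ℕ, P.eval (i:ℝ) / (i:ℝ)^j
      = ∑ k ∈ Finset.range (j + 1), P.coeff k * (i:ℝ)^k / (i:ℝ)^j := by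
    intro i
    rw [Polynomial.eval_eq_sum_range' (by omega : P.natDegree < j+1), Finset.sum_div]
  simp only [hev]
  have key : Tendsto (fun i : ℕ => ∑ k ∈ Finset.range (j + 1),
      P.coeff k * (i:ℝ)^k / (i:ℝ)^j) atTop
      (nhds (∑ k ∈ Finset.range (j + 1), if k = j then P.coeff j else 0)) := by
    apply tendsto_finset_sum
    intro k hk
    rw [Finset.mem_range] at hk
    by_cases hkj : k = j
    · subst hkj
      rw [if_pos rfl]
      apply Tendsto.congr' (f₁ := fun _ : ℕ => P.coeff k)
      · filter_upwards [eventually_ge_atTop 1] with i hi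
        have : ((i:ℝ))^k ≠ 0 := pow_ne_zero _ (by positivity)
        field_simp
      · exact tendsto_const_nhds
    · rw [if_neg hkj]
      have hklt : k < j := by omega
      apply Tendsto.congr' (f₁ := fun i : ℕ => P.coeff k * ((i:ℝ)^(j-k))⁻¹)
      · filter_upwards [eventually_ge_atTop 1] with i hi
        have h1 : ((i:ℝ)) ≠ 0 := by positivity
        rw [mul_div_assoc]
        congr 1
        rw [eq_div_iff (pow_ne_zero _ h1), inv_mul_eq_div, div_eq_iff (pow_ne_zero _ h1),
          ← pow_add]
        congr 1
        omega
      · have : Tendsto (fun i : ℕ => ((i:ℝ)^(j-k))) atTop atTop :=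
          (tendsto_pow_atTop (by omega)).comp tendsto_natCast_atTop_atTop
        simpa using (this.inv_tendsto_atTop).const_mul (P.coeff k)
  have : (∑ k ∈ Finset.range (j + 1), if k = j then P.coeff j else 0) = P.coeff j := by
    rw [Finset.sum_ite_eq' (Finset.range (j+1)) j (fun _ => P.coeff j)]
    simp
  rwa [this] at key

/-- The balance equations of the discrete-time preemptive priority queue
(early arrival system). -/
def BalanceEquations (p q mh ml : ℝ) (pi : ℕ → ℕ → ℝ) : Prop :=
  ((1 - ((1-p)*(1-q) + p*(1-q)*mh + (1-p)*q*ml)) * pi 0 0 =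
      (1-p)*(1-q)*mh * pi 1 0 + (1-p)*(1-q)*ml * pi 0 1) ∧
  (∀ i : ℕ, 1 ≤ i →
    (1 - ((1-p)*(1-q)*(1-mh) + p*(1-q)*mh)) * pi i 0 =
      p*(1-q)*(1-mh) * pi (i-1) 0 + (1-p)*(1-q)*mh * pi (i+1) 0) ∧
  (∀ j : ℕ, 1 ≤ j →
    (1 - ((1-p)*(1-q)*(1-ml) + p*(1-q)*mh + (1-p)*q*ml)) * pi 0 j =
      (p*q*mh + (1-p)*q*(1-ml)) * pi 0 (j-1) + (1-p)*(1-q)*ml * pi 0 (j+1) +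
      (1-p)*q*mh * pi 1 (j-1) + (1-p)*(1-q)*mh * pi 1 j) ∧
  (∀ i j : ℕ, 1 ≤ i → 1 ≤ j →
    (1 - ((1-p)*(1-q)*(1-mh) + p*(1-q)*mh)) * pi i j =
      p*(1-q)*(1-mh) * pi (i-1) j + (1-p)*(1-q)*mh * pi (i+1) j +
      (1-p)*q*mh * pi (i+1) (j-1) + (p*q*mh + (1-p)*q*(1-mh)) * pi i (j-1) +
      p*q*(1-mh) * pi (i-1) (j-1))

set_option maxHeartbeats 1000000 in
/-- exact tail asymptotics along the high-priority direction:
`pi_{i,j} ~ (C^j·pi_{0,0}/j!)·i^j·r_0^i` for each fixed `j`. -/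
theorem tail_high_priority_joint
    (p q mh ml : ℝ)
    (hp : p ∈ Set.Ioo (0:ℝ) 1) (hq : q ∈ Set.Ioo (0:ℝ) 1)
    (hmh : mh ∈ Set.Ioo (0:ℝ) 1) (hml : ml ∈ Set.Ioo (0:ℝ) 1)
    (hpar : p + q + mh + ml = 1)
    (hrho : p / mh + q / ml < 1)
    (Delta : ℝ → ℝ)
    (hDelta : ∀ y, Delta y = (p*mh - (1-p)*(1-mh))^2*(q*y + 1 - q)^2
        - 2*(p*mh + (1-p)*(1-mh))*(q*y + 1 - q) + 1)
    (x10 r0 : ℝ)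
    (hx10 : x10 = (1 - (p*mh + (1-p)*(1-mh))*(1-q) + Real.sqrt (Delta 0))
        / (2*p*(1-mh)*(1-q)))
    (hr0 : r0 = 1 / x10)
    (pi : ℕ → ℕ → ℝ)
    (hnn : ∀ i j : ℕ, 0 ≤ pi i j)
    (hsum : HasSum (fun ij : ℕ × ℕ => pi ij.1 ij.2) 1)
    (hbal : BalanceEquations p q mh ml pi)
    (C : ℝ)
    (hC : C = (q/(1-q)) * ((1-p)*mh*r0^2 + (p*mh + (1-p)*(1-mh))*r0 + p*(1-mh))
        / (p*(1-mh) - (1-p)*mh*r0^2))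
    : ∀ j : ℕ,
      Filter.Tendsto (fun i : ℕ => pi i j / ((i:ℝ)^j * r0 ^ i))
        Filter.atTop
        (nhds (C^j * pi 0 0 / (Nat.factorial j : ℝ))) := by
  obtain ⟨hp0, hp1⟩ := hp
  obtain ⟨hq0, hq1⟩ := hq
  obtain ⟨hmh0, hmh1⟩ := hmh
  obtain ⟨hb1, hb2, hb3, hb4⟩ := hbal
  have h1q : (0:ℝ) < 1 - q := by linarith
  have h1p : (0:ℝ) < 1 - p := by linarith
  have h1mh : (0:ℝ) < 1 - mh := by linarith
  set Dv : ℝ := 1 - ((1-p)*(1-q)*(1-mh) + p*(1-q)*mh) with hDv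
  set Av : ℝ := (1-p)*(1-q)*mh with hAv
  set Bv : ℝ := p*(1-q)*(1-mh) with hBv
  set alp : ℝ := (1-p)*q*mh with halp
  set bet : ℝ := p*q*mh + (1-p)*q*(1-mh) with hbet
  set gam : ℝ := p*q*(1-mh) with hgam
  clear_value Dv Av Bv alp bet gam
  have hA : 0 < Av := by rw [hAv]; positivity
  have hB : 0 < Bv := by rw [hBv]; positivity
  have hDq : Dv = Av + Bv + q := by rw [hDv, hAv, hBv]; ring
  have hD : 0 < Dv := by rw [hDq]; linarith
  have hDelta0 : Delta 0 = Dv^2 - 4*(Av*Bv) := by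
    rw [hDelta 0, hDv, hAv, hBv]; ring
  have hDel : 0 < Delta 0 := by
    rw [hDelta0]; nlinarith [sq_nonneg (Av - Bv)]
  set s : ℝ := Real.sqrt (Delta 0) with hs
  clear_value s
  have hs2 : s^2 = Dv^2 - 4*(Av*Bv) := by
    rw [hs, Real.sq_sqrt hDel.le, hDelta0]
  have hspos : 0 < s := by rw [hs]; exact Real.sqrt_pos.mpr hDel
  have hx10' : x10 = (Dv + s)/(2*Bv) := by
    rw [hx10, hDv, hBv]; congr 1 <;> ring
  have hx10pos : 0 < x10 := by rw [hx10']; positivity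
  have hx10root : Bv*x10^2 - Dv*x10 + Av = 0 := by
    rw [hx10']
    field_simp
    linear_combination hs2
  have hr0pos : 0 < r0 := by rw [hr0]; positivity
  have hroot0 : Av*r0^2 - Dv*r0 + Bv = 0 := by
    rw [hr0]
    have hx10ne : x10 ≠ 0 := ne_of_gt hx10pos
    field_simp
    linear_combination hx10root
  have hx10gt1 : 1 < x10 := by
    rw [hx10', lt_div_iff₀ (by positivity)]
    have hkey : s^2 - (2*Bv - Dv)^2 = 4*Bv*q := by
      linear_combination hs2 + 4*Bv*hDq
    rcases le_or_gt (2*Bv) Dv with h | h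
    · linarith
    · have h2 : (2*Bv - Dv)^2 < s^2 := by linarith [hkey, mul_pos hB hq0]
      by_contra hcon
      push_neg at hcon
      have h3 : s ≤ 2*Bv - Dv := by linarith
      have h4 := pow_le_pow_left₀ hspos.le h3 2
      linarith
  have hr0lt1 : r0 < 1 := by
    rw [hr0]
    rw [div_lt_one (by linarith)]
    linarith
  set r2 : ℝ := (Dv + s)/(2*Av) with hr2def
  clear_value r2
  have hroot2 : Av*r2^2 - Dv*r2 + Bv = 0 := by
    rw [hr2def]
    field_simp
    linear_combination hs2
  have hr2gt1 : 1 < r2 := by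
    rw [hr2def, lt_div_iff₀ (by positivity)]
    have hkey : s^2 - (2*Av - Dv)^2 = 4*Av*q := by
      linear_combination hs2 + 4*Av*hDq
    rcases le_or_gt (2*Av) Dv with h | h
    · linarith
    · have h2 : (2*Av - Dv)^2 < s^2 := by linarith [hkey, mul_pos hA hq0]
      by_contra hcon
      push_neg at hcon
      have h3 : s ≤ 2*Av - Dv := by linarith
      have h4 := pow_le_pow_left₀ hspos.le h3 2
      linarith
  have hr0r2 : r0 < r2 := lt_trans hr0lt1 hr2gt1
  have hne : r0 ≠ r2 := ne_of_lt hr0r2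
  have hsum2 : Av*(r0 + r2) = Dv := by
    have h2 : (Av*(r0+r2) - Dv)*(r0-r2) = 0 := by linear_combination hroot0 - hroot2
    rcases mul_eq_zero.mp h2 with h | h
    · linarith
    · exact absurd (by linarith : r0 = r2) hne
  have hprod : Av*(r0*r2) = Bv := by linear_combination r0*hsum2 - hroot0
  have hBA : 0 < Bv - Av*r0^2 := by
    have hfac : Bv - Av*r0^2 = (Av*r0)*(r2-r0) := by linear_combination -hprod
    rw [hfac]
    exact mul_pos (mul_pos hA hr0pos) (sub_pos.mpr hr0r2)
  have hcc : Dv*r0 - Av*r0^2 - Bv = 0 := by linear_combination -hroot0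
  have hee : Bv - Av*r0^2 ≠ 0 := ne_of_gt hBA
  have hDppos : 0 < p*(1-mh) - (1-p)*mh*r0^2 := by
    have hrewr : Bv - Av*r0^2 = (1-q)*(p*(1-mh) - (1-p)*mh*r0^2) := by rw [hAv, hBv]; ring
    have h5 : 0 < (1-q)*(p*(1-mh) - (1-p)*mh*r0^2) := hrewr ▸ hBA
    by_contra hcon
    push_neg at hcon
    have h6 := mul_nonpos_of_nonneg_of_nonpos h1q.le hcon
    linarith
  have hDpne : (p*(1-mh) - (1-p)*mh*r0^2) ≠ 0 := ne_of_gt hDppos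
  have h1qne : (1-q) ≠ 0 := ne_of_gt h1q
  have hCkey : alp*r0^2 + bet*r0 + gam = C * (Bv - Av*r0^2) := by
    rw [hC, halp, hbet, hgam, hAv, hBv]
    field_simp
  -- summability along each column
  have hsummable : ∀ j : ℕ, Summable (fun i : ℕ => pi i j) := by
    intro j
    have h0 := hsum.summable
    have hinj : Function.Injective (fun i : ℕ => ((i, j) : ℕ × ℕ)) := by
      intro a b hab; simpa using congrArg Prod.fst hab
    exact h0.comp_injective hinj
  have hcol0 : ∀ j : ℕ, Tendsto (fun i : ℕ => pi i j) atTop (nhds 0) :=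
    fun j => (hsummable j).tendsto_atTop_zero
  have habs : |r0| < 1 := by rw [abs_of_pos hr0pos]; exact hr0lt1
  have hAne : Av ≠ 0 := ne_of_gt hA
  -- the key structural induction
  have key : ∀ j : ℕ, ∃ P : ℝ[X], P.natDegree ≤ j ∧
      P.coeff j = C^j * pi 0 0 / (Nat.factorial j : ℝ) ∧
      ∀ i : ℕ, pi i j = P.eval (i:ℝ) * r0^i := by
    intro j
    induction j with
    | zero =>
      have hgeo := aux_homog Av Bv Dv r0 r2 hAne habs hr2gt1 hroot0 hroot2 hne
        (fun i => pi i 0) hb2 (hcol0 0)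
      refine ⟨Polynomial.C (pi 0 0), by simp, by simp [Nat.factorial], fun i => ?_⟩
      simpa using hgeo i
    | succ j ih =>
      obtain ⟨Pj, hPjdeg, hPjcoeff, hPjeval⟩ := ih
      set Qp : ℝ[X] := Polynomial.C (alp*r0^2) * Pj.comp (X + Polynomial.C 1)
        + Polynomial.C (bet*r0) * Pj
        + Polynomial.C gam * Pj.comp (X + Polynomial.C (-1)) with hQpdef
      have hcompdeg : ∀ r : ℝ, (Pj.comp (X + Polynomial.C r)).natDegree ≤ j := by
        intro r
        rw [natDegree_comp, natDegree_X_add_C, mul_one]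
        exact hPjdeg
      have hQdeg : Qp.natDegree ≤ j := by
        rw [hQpdef]
        refine le_trans (natDegree_add_le _ _)
          (max_le (le_trans (natDegree_add_le _ _) (max_le ?_ ?_)) ?_)
        · exact le_trans (natDegree_C_mul_le _ _) (hcompdeg 1)
        · exact le_trans (natDegree_C_mul_le _ _) hPjdeg
        · exact le_trans (natDegree_C_mul_le _ _) (hcompdeg (-1))
      have hQcoeff : Qp.coeff j = (alp*r0^2 + bet*r0 + gam) * Pj.coeff j := by
        rw [hQpdef, coeff_add, coeff_add, coeff_C_mul, coeff_C_mul, coeff_C_mul,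
          aux_coeff_comp_X_add_C Pj 1 j hPjdeg, aux_coeff_comp_X_add_C Pj (-1) j hPjdeg]
        ring
      obtain ⟨Pt, hT, hPtdeg, hPtcoeff⟩ :=
        aux_surjT (Dv*r0) (Av*r0^2) Bv (by linear_combination hcc) hee j Qp hQdeg
      have hTev : ∀ x : ℝ, Dv*r0 * Pt.eval x - Av*r0^2 * Pt.eval (x+1)
          - Bv * Pt.eval (x + (-1)) = Qp.eval x := by
        intro x
        have h7 := congrArg (Polynomial.eval x) hT
        rw [auxT] at h7
        simp only [eval_sub, eval_mul, eval_C, eval_comp, eval_add, eval_X] at h7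
        exact h7
      have hQev : ∀ x : ℝ, Qp.eval x = alp*r0^2 * Pj.eval (x+1) + bet*r0 * Pj.eval x
          + gam * Pj.eval (x + (-1)) := by
        intro x
        rw [hQpdef]
        simp only [eval_add, eval_mul, eval_C, eval_comp, eval_X]
      set w : ℕ → ℝ := fun i => pi i (j+1) - Pt.eval (i:ℝ) * r0^i with hwdef
      have hwrec : ∀ i : ℕ, 1 ≤ i → Dv * w i = Bv * w (i-1) + Av * w (i+1) := by
        intro i hi
        obtain ⟨m, rfl⟩ : ∃ m, i = m + 1 := ⟨i - 1, by omega⟩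
        have hbal4 := hb4 (m+1) (j+1) (by omega) (by omega)
        simp only [Nat.add_sub_cancel] at hbal4
        have hTm := hTev ((m:ℝ)+1)
        have hQm := hQev ((m:ℝ)+1)
        rw [show ((m:ℝ))+1+(-1) = ((m:ℝ)) from by ring] at hTm hQm
        have e1 : pi (m+1+1) j = Pj.eval ((m:ℝ)+1+1) * r0^(m+1+1) := by
          have h8 := hPjeval (m+1+1); push_cast at h8 ⊢; exact h8
        have e2 : pi (m+1) j = Pj.eval ((m:ℝ)+1) * r0^(m+1) := by
          have h8 := hPjeval (m+1); push_cast at h8 ⊢; exact h8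
        have e3 : pi m j = Pj.eval ((m:ℝ)) * r0^m := hPjeval m
        simp only [hwdef, Nat.add_sub_cancel]
        push_cast
        linear_combination hbal4 + alp*e1 + bet*e2 + gam*e3 - r0^m*hQm - r0^m*hTm
      have hwz : Tendsto w atTop (nhds 0) := by
        have h8 := aux_poly_geom_tendsto_zero Pt hr0pos.le hr0lt1
        rw [hwdef]
        simpa using (hcol0 (j+1)).sub h8
      have hgeo := aux_homog Av Bv Dv r0 r2 hAne habs hr2gt1 hroot0 hroot2 hne w hwrec hwz
      refine ⟨Pt + Polynomial.C (w 0), ?_, ?_, ?_⟩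
      · exact le_trans (natDegree_add_le _ _) (by simp [hPtdeg])
      · rw [coeff_add, coeff_C, if_neg (by omega : ¬(j+1 = 0)), add_zero, hPtcoeff,
          hQcoeff, hPjcoeff, hCkey]
        have hfac : (Nat.factorial (j+1) : ℝ) = ((j:ℝ)+1) * (Nat.factorial j : ℝ) := by
          rw [Nat.factorial_succ]; push_cast; ring
        rw [hfac]
        have hjne : ((j:ℝ)+1) ≠ 0 := by positivity
        have hfactne : (Nat.factorial j : ℝ) ≠ 0 :=
          Nat.cast_ne_zero.mpr (Nat.factorial_ne_zero j)
        field_simp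
        ring
      · intro i
        have h9 := hgeo i
        have h10 : pi i (j+1) = Pt.eval (i:ℝ) * r0^i + w 0 * r0^i := by
          rw [← h9]; simp [hwdef]
        rw [h10, eval_add, eval_C]; ring
  -- conclusion
  intro j
  obtain ⟨P, hdeg, hcoeff, heval⟩ := key j
  have hlim := aux_poly_div_pow_tendsto P j hdeg
  rw [hcoeff] at hlim
  apply hlim.congr
  intro i
  rw [heval i, mul_div_mul_right _ _ (pow_ne_zero i (ne_of_gt hr0pos))]
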